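/- With Q', Q₁, Q₂ as in the previous statement: if Q₁ is not contained in Q₂, witnessed by an S-database D* with D* ⊨ Q₁ and D* ⊭ Q₂, then for every k ≥ 1 the S'-database D_k extending D* with fresh elements a₀,…,a_k and facts B(a₀), R(a₀,a₁), …, R(a_{k−1},a_k), A(a_k) satisfies D_k ⊨ Q', while every subdatabase of D_k obtained by removing at least one of the fresh path facts fails Q' (provided D* ⊭ Q₂ is preserved under restriction, i.e., Q₂ is closed under homomorphisms and the fresh elements are disjoint from adom(D*)). Consequently Q' is not equivalent to any finite UCQ. -/

import Mathlib

/-- The three extra relation symbols `R/2`, `A/1`, `B/1`. -/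
inductive Extra where
  | r | a | b
  deriving DecidableEq

/-- Facts over the schema `S`. -/
abbrev FactS (S : Type) (arity : S → ℕ) := Σ R : S, Fin (arity R) → ℕ

/-- Arities over the extended schema `S' = S ∪ {R/2, A/1, B/1}`. -/
def arity' {S : Type} (arity : S → ℕ) : S ⊕ Extra → ℕ
  | Sum.inl R => arity R
  | Sum.inr Extra.r => 2
  | Sum.inr Extra.a => 1
  | Sum.inr Extra.b => 1

/-- Facts over the extended schema `S'`. -/
abbrev Fact' (S : Type) (arity : S → ℕ) := Σ R : S ⊕ Extra, Fin (arity' arity R) → ℕ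

/-- The restriction `D[S]` of an `S'`-database to the schema `S`. -/
def restrict {S : Type} [DecidableEq S] (arity : S → ℕ)
    (D' : Finset (Fact' S arity)) : Finset (FactS S arity) :=
  D'.biUnion fun f =>
    match f with
    | ⟨Sum.inl R, t⟩ => {⟨R, t⟩}
    | ⟨Sum.inr _, _⟩ => ∅

/-- Some element satisfying `B` reaches, along an `R`-path, an element
satisfying `A`. -/
def HasPath {S : Type} (arity : S → ℕ) (D' : Finset (Fact' S arity)) : Prop :=
  ∃ (k : ℕ) (c : Fin (k + 1) → ℕ),
    (⟨Sum.inr Extra.b, ![c 0]⟩ : Fact' S arity) ∈ D' ∧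
    (⟨Sum.inr Extra.a, ![c (Fin.last k)]⟩ : Fact' S arity) ∈ D' ∧
    ∀ i : Fin k, (⟨Sum.inr Extra.r, ![c i.castSucc, c i.succ]⟩ : Fact' S arity) ∈ D'

/-- The combined query `Q'` on `S'`-databases. -/
def Qprime {S : Type} [DecidableEq S] (arity : S → ℕ)
    (Q₁ Q₂ : Finset (FactS S arity) → Prop) (D' : Finset (Fact' S arity)) : Prop :=
  Q₂ (restrict arity D') ∨ (Q₁ (restrict arity D') ∧ HasPath arity D')

/-- A homomorphism between `S'`-databases. -/
def Hom' {S : Type} (arity : S → ℕ) (D E : Finset (Fact' S arity)) : Prop :=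
  ∃ h : ℕ → ℕ, ∀ f ∈ D, (⟨f.1, h ∘ f.2⟩ : Fact' S arity) ∈ E

/-- The active domain of an `S`-database. -/
def adomS {S : Type} (arity : S → ℕ) (D : Finset (FactS S arity)) (x : ℕ) : Prop :=
  ∃ f ∈ D, ∃ i : Fin (arity f.1), f.2 i = x

/-- An `S`-database viewed as an `S'`-database. -/
def embed {S : Type} [DecidableEq S] (arity : S → ℕ)
    (D : Finset (FactS S arity)) : Finset (Fact' S arity) :=
  D.image fun f => (⟨Sum.inl f.1, f.2⟩ : Fact' S arity)

/-- The fresh path facts `B(c 0), R(c 0, c 1), …, R(c (k-1), c k), A(c k)`. -/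
def pathFacts {S : Type} [DecidableEq S] (arity : S → ℕ) (k : ℕ)
    (c : Fin (k + 1) → ℕ) : Finset (Fact' S arity) :=
  {(⟨Sum.inr Extra.b, ![c 0]⟩ : Fact' S arity),
   (⟨Sum.inr Extra.a, ![c (Fin.last k)]⟩ : Fact' S arity)} ∪
    Finset.image (fun i : Fin k =>
      (⟨Sum.inr Extra.r, ![c i.castSucc, c i.succ]⟩ : Fact' S arity)) Finset.univ
section Helpers
variable {S : Type} [DecidableEq S] (arity : S → ℕ)

lemma mem_restrict {D' : Finset (Fact' S arity)} {R : S} {t : Fin (arity R) → ℕ} :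
    (⟨R, t⟩ : FactS S arity) ∈ restrict arity D' ↔
      (⟨Sum.inl R, t⟩ : Fact' S arity) ∈ D' := by
  unfold restrict
  simp only [Finset.mem_biUnion]
  constructor
  · rintro ⟨⟨r, u⟩, hf, hm⟩
    cases r with
    | inl r =>
        simp only [Finset.mem_singleton] at hm
        obtain ⟨rfl, h⟩ := Sigma.mk.inj_iff.mp hm
        cases h
        exact hf
    | inr e => simp at hm
  · intro h
    exact ⟨⟨Sum.inl R, t⟩, h, by simp⟩

lemma not_mem_embed {D : Finset (FactS S arity)} (e : Extra)
    (t : Fin (arity' arity (Sum.inr e)) → ℕ) :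
    (⟨Sum.inr e, t⟩ : Fact' S arity) ∉ embed arity D := by
  simp [embed]
  intro x y _ h
  exact absurd (Sigma.mk.inj_iff.mp h).1 (by simp)

lemma mem_embed {D : Finset (FactS S arity)} {R : S} {t : Fin (arity R) → ℕ} :
    (⟨Sum.inl R, t⟩ : Fact' S arity) ∈ embed arity D ↔ (⟨R, t⟩ : FactS S arity) ∈ D := by
  constructor
  · intro h
    simp only [embed, Finset.mem_image] at h
    obtain ⟨⟨r, u⟩, hm, heq⟩ := h
    obtain ⟨h1, h2⟩ := Sigma.mk.inj_iff.mp heq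
    cases Sum.inl.inj h1
    cases h2
    exact hm
  · intro h
    exact Finset.mem_image_of_mem _ h

lemma mem_pathFacts {k : ℕ} {c : Fin (k + 1) → ℕ} {f : Fact' S arity} :
    f ∈ pathFacts arity k c ↔
      f = (⟨Sum.inr Extra.b, ![c 0]⟩ : Fact' S arity) ∨
      f = (⟨Sum.inr Extra.a, ![c (Fin.last k)]⟩ : Fact' S arity) ∨
      ∃ i : Fin k, f = (⟨Sum.inr Extra.r, ![c i.castSucc, c i.succ]⟩ : Fact' S arity) := by
  simp [pathFacts, eq_comm]

lemma pathFacts_no_inl {k : ℕ} {c : Fin (k + 1) → ℕ} {R : S} {t : Fin (arity R) → ℕ} :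
    (⟨Sum.inl R, t⟩ : Fact' S arity) ∉ pathFacts arity k c := by
  rw [mem_pathFacts]
  rintro (h | h | ⟨i, h⟩) <;> exact absurd (Sigma.mk.inj_iff.mp h).1 (by simp)

end Helpers
section Core
variable {S : Type} [DecidableEq S] (arity : S → ℕ)

lemma vec1_inj {x y : ℕ} (h : (![x] : Fin 1 → ℕ) = ![y]) : x = y := congrFun h 0

lemma restrict_sub {Dstar : Finset (FactS S arity)} {k : ℕ} {c : Fin (k + 1) → ℕ}
    {E : Finset (Fact' S arity)}
    (hE : E ⊆ embed arity Dstar ∪ pathFacts arity k c) :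
    restrict arity E ⊆ Dstar := by
  rintro ⟨R, t⟩ h
  rw [mem_restrict] at h
  rcases Finset.mem_union.mp (hE h) with h | h
  · exact (mem_embed arity).mp h
  · exact absurd h (pathFacts_no_inl arity)

lemma restrict_union (Dstar : Finset (FactS S arity)) (k : ℕ) (c : Fin (k + 1) → ℕ) :
    restrict arity (embed arity Dstar ∪ pathFacts arity k c) = Dstar := by
  apply Finset.Subset.antisymm (restrict_sub arity (le_refl _))
  rintro ⟨R, t⟩ h
  rw [mem_restrict]
  exact Finset.mem_union_left _ ((mem_embed arity).mpr h)

lemma no_path {Dstar : Finset (FactS S arity)} {k : ℕ} {c : Fin (k + 1) → ℕ}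
    (hc : Function.Injective c) {E : Finset (Fact' S arity)}
    (hE : E ⊆ embed arity Dstar ∪ pathFacts arity k c)
    {f : Fact' S arity} (hf : f ∈ pathFacts arity k c) (hfE : f ∉ E) :
    ¬ HasPath arity E := by
  rintro ⟨m, d, hB, hA, hR⟩
  -- characterize extra facts in E
  have hEb : ∀ x : ℕ, (⟨Sum.inr Extra.b, ![x]⟩ : Fact' S arity) ∈ E → x = c 0 := by
    intro x hx
    rcases Finset.mem_union.mp (hE hx) with h | h
    · exact absurd h (not_mem_embed arity _ _)
    · rw [mem_pathFacts] at h
      rcases h with h | h | ⟨i, h⟩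
      · obtain ⟨-, h2⟩ := Sigma.mk.inj_iff.mp h
        exact vec1_inj (eq_of_heq h2)
      · exact absurd (Sigma.mk.inj_iff.mp h).1 (by simp)
      · exact absurd (Sigma.mk.inj_iff.mp h).1 (by simp)
  have hEa : ∀ x : ℕ, (⟨Sum.inr Extra.a, ![x]⟩ : Fact' S arity) ∈ E → x = c (Fin.last k) := by
    intro x hx
    rcases Finset.mem_union.mp (hE hx) with h | h
    · exact absurd h (not_mem_embed arity _ _)
    · rw [mem_pathFacts] at h
      rcases h with h | h | ⟨i, h⟩
      · exact absurd (Sigma.mk.inj_iff.mp h).1 (by simp)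
      · obtain ⟨-, h2⟩ := Sigma.mk.inj_iff.mp h
        exact vec1_inj (eq_of_heq h2)
      · exact absurd (Sigma.mk.inj_iff.mp h).1 (by simp)
  have hEr : ∀ x y : ℕ, (⟨Sum.inr Extra.r, ![x, y]⟩ : Fact' S arity) ∈ E →
      ∃ j : Fin k, x = c j.castSucc ∧ y = c j.succ := by
    intro x y hx
    rcases Finset.mem_union.mp (hE hx) with h | h
    · exact absurd h (not_mem_embed arity _ _)
    · rw [mem_pathFacts] at h
      rcases h with h | h | ⟨i, h⟩
      · exact absurd (Sigma.mk.inj_iff.mp h).1 (by simp)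
      · exact absurd (Sigma.mk.inj_iff.mp h).1 (by simp)
      · obtain ⟨-, h2⟩ := Sigma.mk.inj_iff.mp h
        have h2' := eq_of_heq h2
        exact ⟨i, congrFun h2' 0, congrFun h2' 1⟩
  rw [mem_pathFacts] at hf
  rcases hf with rfl | rfl | ⟨i, rfl⟩
  · -- f is the B fact
    have := hEb (d 0) hB
    rw [this] at hB
    exact hfE hB
  · have := hEa (d (Fin.last m)) hA
    rw [this] at hA
    exact hfE hA
  · -- f is an R fact; any R fact in E has index ≠ i
    have hEr' : ∀ x y : ℕ, (⟨Sum.inr Extra.r, ![x, y]⟩ : Fact' S arity) ∈ E →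
        ∃ j : Fin k, j ≠ i ∧ x = c j.castSucc ∧ y = c j.succ := by
      intro x y hx
      obtain ⟨j, hx1, hy1⟩ := hEr x y hx
      refine ⟨j, ?_, hx1, hy1⟩
      rintro rfl
      rw [hx1, hy1] at hx
      exact hfE hx
    -- invariant
    have inv : ∀ t : ℕ, ∀ ht : t ≤ m, ∃ j : Fin (k + 1), (j : ℕ) ≤ (i : ℕ) ∧
        d ⟨t, Nat.lt_succ_of_le ht⟩ = c j := by
      intro t
      induction t with
      | zero =>
          intro _
          refine ⟨0, Nat.zero_le _, ?_⟩
          have h0 := hEb (d 0) hB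
          convert h0 using 2
          simp
      | succ t ih =>
          intro ht
          obtain ⟨j, hj, hd⟩ := ih (Nat.le_of_succ_le ht)
          have hstep := hR ⟨t, ht⟩
          have hcast : (⟨t, ht⟩ : Fin m).castSucc = ⟨t, Nat.lt_succ_of_le (Nat.le_of_succ_le ht)⟩ := rfl
          have hsucc : (⟨t, ht⟩ : Fin m).succ = ⟨t + 1, Nat.lt_succ_of_le ht⟩ := rfl
          rw [hcast, hsucc] at hstep
          obtain ⟨j', hj'i, hx1, hy1⟩ := hEr' _ _ hstep
          rw [hd] at hx1
          have hjj : j = j'.castSucc := hc hx1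
          have hjval : (j' : ℕ) = (j : ℕ) := by
            have := congrArg Fin.val hjj
            simpa using this.symm
          have hj'lt : (j' : ℕ) < (i : ℕ) := by
            rcases lt_or_eq_of_le (le_of_eq_of_le hjval hj) with h | h
            · exact h
            · exact absurd (Fin.ext h) hj'i
          refine ⟨j'.succ, by simpa using hj'lt, hy1⟩
    obtain ⟨j, hj, hd⟩ := inv m (le_refl m)
    have hlast := hEa (d (Fin.last m)) hA
    have hcc : c j = c (Fin.last k) := by
      rw [← hd, ← hlast]
      congr 1
    have := congrArg Fin.val (hc hcc)
    simp [Fin.last] at this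
    have := i.isLt
    omega

end Core
section Main
variable {S : Type} [DecidableEq S] (arity : S → ℕ)
  (Q₁ Q₂ : Finset (FactS S arity) → Prop)

lemma Qprime_union
    (Dstar : Finset (FactS S arity)) (hD1 : Q₁ Dstar) (k : ℕ) (c : Fin (k + 1) → ℕ) :
    Qprime arity Q₁ Q₂ (embed arity Dstar ∪ pathFacts arity k c) := by
  refine Or.inr ⟨by rw [restrict_union]; exact hD1, k, c, ?_, ?_, ?_⟩
  · exact Finset.mem_union_right _ ((mem_pathFacts arity).mpr (Or.inl rfl))
  · exact Finset.mem_union_right _ ((mem_pathFacts arity).mpr (Or.inr (Or.inl rfl)))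
  · exact fun i => Finset.mem_union_right _
      ((mem_pathFacts arity).mpr (Or.inr (Or.inr ⟨i, rfl⟩)))

lemma not_Qprime_sub
    (hQ₂hom : ∀ D E : Finset (FactS S arity), Q₂ D →
      (∃ h : ℕ → ℕ, ∀ f ∈ D, (⟨f.1, h ∘ f.2⟩ : FactS S arity) ∈ E) → Q₂ E)
    {Dstar : Finset (FactS S arity)} (hD2 : ¬ Q₂ Dstar)
    {k : ℕ} {c : Fin (k + 1) → ℕ} (hc : Function.Injective c)
    {E : Finset (Fact' S arity)}
    (hE : E ⊆ embed arity Dstar ∪ pathFacts arity k c)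
    {f : Fact' S arity} (hf : f ∈ pathFacts arity k c) (hfE : f ∉ E) :
    ¬ Qprime arity Q₁ Q₂ E := by
  rintro (h | ⟨-, h2⟩)
  · refine hD2 (hQ₂hom _ _ h ⟨id, fun g hg => ?_⟩)
    have : (⟨g.1, id ∘ g.2⟩ : FactS S arity) = g := by
      cases g; rfl
    rw [this]
    exact restrict_sub arity hE hg
  · exact no_path arity hc hE hf hfE h2

end Main
/-- If `Q₁` is not contained in `Q₂`, witnessed by `Dstar ⊨ Q₁`, `Dstar ⊭ Q₂`,
with `Q₂` closed under homomorphisms, then for every `k ≥ 1` the database `D_k`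
obtained by adding a fresh `B`-to-`A` `R`-path of length `k` satisfies `Q'`,
while removing any one of the fresh path facts falsifies `Q'`; consequently `Q'`
is not equivalent to any finite UCQ. -/
theorem stmt19 {S : Type} [DecidableEq S] (arity : S → ℕ)
    (Q₁ Q₂ : Finset (FactS S arity) → Prop)
    (hQ₂hom : ∀ D E : Finset (FactS S arity), Q₂ D →
      (∃ h : ℕ → ℕ, ∀ f ∈ D, (⟨f.1, h ∘ f.2⟩ : FactS S arity) ∈ E) → Q₂ E)
    (Dstar : Finset (FactS S arity))
    (hD1 : Q₁ Dstar) (hD2 : ¬ Q₂ Dstar) :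
    (∀ k : ℕ, 1 ≤ k → ∀ c : Fin (k + 1) → ℕ, Function.Injective c →
      (∀ i : Fin (k + 1), ¬ adomS arity Dstar (c i)) →
      Qprime arity Q₁ Q₂ (embed arity Dstar ∪ pathFacts arity k c) ∧
      ∀ f ∈ pathFacts arity k c,
        ¬ Qprime arity Q₁ Q₂ ((embed arity Dstar ∪ pathFacts arity k c).erase f)) ∧
    ¬ ∃ q : Finset (Finset (Fact' S arity)),
        ∀ D' : Finset (Fact' S arity),
          Qprime arity Q₁ Q₂ D' ↔ ∃ p ∈ q, Hom' arity p D' := by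
  constructor
  · intro k _ c hc _
    constructor
    · exact Qprime_union arity Q₁ Q₂ Dstar hD1 k c
    · intro f hf
      exact not_Qprime_sub arity Q₁ Q₂ hQ₂hom hD2 hc (Finset.erase_subset _ _) hf
        (Finset.notMem_erase _ _)
  · rintro ⟨q, hq⟩
    set K := q.sup Finset.card + 1 with hK
    set c : Fin (K + 1) → ℕ := Fin.val with hcdef
    have hc : Function.Injective c := Fin.val_injective
    set DK := embed arity Dstar ∪ pathFacts arity K c with hDK
    have hQDK : Qprime arity Q₁ Q₂ DK := Qprime_union arity Q₁ Q₂ Dstar hD1 K c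
    obtain ⟨p, hpq, h, hh⟩ := (hq DK).mp hQDK
    set E : Finset (Fact' S arity) := p.image (fun g => ⟨g.1, h ∘ g.2⟩) with hEdef
    have hEsub : E ⊆ DK := by
      intro g hg
      rw [hEdef, Finset.mem_image] at hg
      obtain ⟨g', hg', rfl⟩ := hg
      exact hh g' hg'
    have hEcard : E.card ≤ q.sup Finset.card :=
      le_trans Finset.card_image_le (Finset.le_sup hpq)
    -- the R-facts alone have cardinality K
    have hinj : Function.Injective (fun i : Fin K =>
        (⟨Sum.inr Extra.r, ![c i.castSucc, c i.succ]⟩ : Fact' S arity)) := by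
      intro i j hij
      obtain ⟨-, h2⟩ := Sigma.mk.inj_iff.mp hij
      have := congrFun (eq_of_heq h2) 0
      exact Fin.castSucc_injective _ (hc this)
    have hcardR : (Finset.image (fun i : Fin K =>
        (⟨Sum.inr Extra.r, ![c i.castSucc, c i.succ]⟩ : Fact' S arity)) Finset.univ).card = K := by
      rw [Finset.card_image_of_injective _ hinj, Finset.card_univ, Fintype.card_fin]
    have hnotsub : ¬ pathFacts arity K c ⊆ E := by
      intro hsub
      have h1 : K ≤ E.card := by
        rw [← hcardR]
        apply Finset.card_le_card
        intro g hg
        apply hsub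
        rw [mem_pathFacts] at *
        rw [Finset.mem_image] at hg
        obtain ⟨i, -, rfl⟩ := hg
        exact Or.inr (Or.inr ⟨i, rfl⟩)
      omega
    obtain ⟨f, hf, hfE⟩ := Finset.not_subset.mp hnotsub
    have hQE : Qprime arity Q₁ Q₂ E :=
      (hq E).mpr ⟨p, hpq, h, fun g hg => Finset.mem_image_of_mem _ hg⟩
    exact not_Qprime_sub arity Q₁ Q₂ hQ₂hom hD2 hc hEsub hf hfE hQE
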